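/- Under the uplink pilot model, with c_j := √(τp)·β_j/(1 + τp·Σ_{i=1}^K β_i) and θ_j := τp·β_j²/(1 + τp·Σ_{i=1}^K β_i), the MMSE channel estimate ĥ_j := c_j·ỹ satisfies (1/L)·E[‖ĥ_j‖²] = θ_j. -/

import Mathlib

open MeasureTheory ProbabilityTheory Real Filter
open scoped BigOperators ComplexConjugate NNReal ENNReal

noncomputable section

lemma my_integral_sq_mul_exp {b : ℝ} (hb : 0 < b) :
    ∫ x : ℝ, x ^ 2 * Real.exp (-b * x ^ 2) = (2 * b)⁻¹ * Real.sqrt (π / b) := by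
  set u : ℝ → ℝ := fun y => y with hu_def
  set v : ℝ → ℝ := fun y => -(2 * b)⁻¹ * Real.exp (-b * y ^ 2) with hv_def
  have hu : ∀ x : ℝ, HasDerivAt u ((fun _ : ℝ => (1:ℝ)) x) x := fun x => hasDerivAt_id x
  have hv : ∀ x : ℝ, HasDerivAt v ((fun y : ℝ => y * Real.exp (-b * y ^ 2)) x) x := by
    intro x
    have h1 : HasDerivAt (fun y : ℝ => -b * y ^ 2) (-b * (2 * x)) x := by
      simpa [mul_comm] using ((hasDerivAt_pow 2 x).const_mul (-b))
    have h2 := (h1.exp).const_mul (-(2 * b)⁻¹)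
    refine h2.congr_deriv ?_
    field_simp
  have hrpow : ∀ x : ℝ, x ^ ((2:ℕ):ℝ) = x ^ (2:ℕ) := fun x => Real.rpow_natCast x 2
  have hint2 : Integrable (fun x : ℝ => x ^ 2 * Real.exp (-b * x ^ 2)) := by
    have := integrable_rpow_mul_exp_neg_mul_sq hb (s := 2) (by norm_num)
    simpa [hrpow] using this
  have hexp : Integrable (fun x : ℝ => Real.exp (-b * x ^ 2)) := integrable_exp_neg_mul_sq hb
  have hxexp : Integrable (fun x : ℝ => x * Real.exp (-b * x ^ 2)) :=
    integrable_mul_exp_neg_mul_sq hb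
  have huv' : Integrable (u * fun y : ℝ => y * Real.exp (-b * y ^ 2)) := by
    refine hint2.congr (ae_of_all _ fun x => ?_)
    simp [hu_def, Pi.mul_apply]; ring
  have hu'v : Integrable ((fun _ : ℝ => (1:ℝ)) * v) := by
    refine (hexp.const_mul (-(2 * b)⁻¹)).congr (ae_of_all _ fun x => ?_)
    simp [hv_def, Pi.mul_apply]
  have huv : Integrable (u * v) := by
    refine (hxexp.const_mul (-(2 * b)⁻¹)).congr (ae_of_all _ fun x => ?_)
    simp [hu_def, hv_def, Pi.mul_apply]; ring
  have key := integral_mul_deriv_eq_deriv_mul_of_integrable (fun x _ => hu x) (fun x _ => hv x) huv' hu'v huv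
  have h1 : ∫ x : ℝ, u x * (fun y : ℝ => y * Real.exp (-b * y ^ 2)) x
      = ∫ x : ℝ, x ^ 2 * Real.exp (-b * x ^ 2) := by
    refine integral_congr_ae (ae_of_all _ fun x => ?_)
    simp [hu_def]; ring
  have h2 : ∫ x : ℝ, (fun _ : ℝ => (1:ℝ)) x * v x
      = -(2 * b)⁻¹ * Real.sqrt (π / b) := by
    simp only [one_mul, hv_def]
    rw [integral_const_mul, integral_gaussian]
  rw [h1, h2] at key
  rw [key]; ring

lemma my_integrable_sq_gaussianReal (v : ℝ≥0) :
    Integrable (fun x : ℝ => x ^ 2) (gaussianReal 0 v) := by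
  by_cases hv : v = 0
  · subst hv
    rw [gaussianReal_zero_var]
    exact (integrable_const ((0:ℝ) ^ 2)).congr (ae_eq_dirac (fun x : ℝ => x ^ 2)).symm
  · have hvpos : (0:ℝ) < (v:ℝ) := by positivity
    rw [gaussianReal_of_var_ne_zero _ hv]
    have hmeas : Measurable fun x : ℝ => (gaussianPDFReal 0 v x).toNNReal :=
      (measurable_gaussianPDFReal 0 v).real_toNNReal
    rw [show gaussianPDF 0 v = (fun x => ((gaussianPDFReal 0 v x).toNNReal : ℝ≥0∞)) from rfl,
      integrable_withDensity_iff_integrable_smul hmeas]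
    have hb : (0:ℝ) < (2 * (v:ℝ))⁻¹ := by positivity
    have hint := (my_integral_sq_mul_exp hb)  -- just to note b
    have h2 : Integrable (fun x : ℝ =>
        (Real.sqrt (2 * π * v))⁻¹ * (x ^ 2 * Real.exp (-(2 * (v:ℝ))⁻¹ * x ^ 2))) := by
      refine Integrable.const_mul ?_ _
      have := integrable_rpow_mul_exp_neg_mul_sq hb (s := 2) (by norm_num)
      simpa [Real.rpow_natCast] using this
    refine h2.congr (ae_of_all _ fun x => ?_)
    have hnn : 0 ≤ gaussianPDFReal 0 v x := gaussianPDFReal_nonneg _ _ _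
    show (√(2 * π * v))⁻¹ * (x ^ 2 * Real.exp (-(2 * (v:ℝ))⁻¹ * x ^ 2))
        = (gaussianPDFReal 0 v x).toNNReal • x ^ 2
    rw [NNReal.smul_def, smul_eq_mul, Real.coe_toNNReal _ hnn, gaussianPDFReal]
    have : -(x - 0) ^ 2 / (2 * (v:ℝ)) = -(2 * (v:ℝ))⁻¹ * x ^ 2 := by
      field_simp
      ring
    rw [this]; ring

lemma my_integral_sq_gaussianReal (v : ℝ≥0) :
    ∫ x, x ^ 2 ∂(gaussianReal 0 v) = v := by
  by_cases hv : v = 0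
  · subst hv
    rw [gaussianReal_zero_var, integral_dirac]
    simp
  · have hvpos : (0:ℝ) < (v:ℝ) := by positivity
    rw [gaussianReal_of_var_ne_zero _ hv]
    have hmeas : Measurable fun x : ℝ => (gaussianPDFReal 0 v x).toNNReal :=
      (measurable_gaussianPDFReal 0 v).real_toNNReal
    rw [show gaussianPDF 0 v = (fun x => ((gaussianPDFReal 0 v x).toNNReal : ℝ≥0∞)) from rfl,
      integral_withDensity_eq_integral_smul hmeas]
    have hb : (0:ℝ) < (2 * (v:ℝ))⁻¹ := by positivity
    have hcong : ∫ x : ℝ, (gaussianPDFReal 0 v x).toNNReal • x ^ 2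
        = ∫ x : ℝ, (Real.sqrt (2 * π * v))⁻¹ * (x ^ 2 * Real.exp (-(2 * (v:ℝ))⁻¹ * x ^ 2)) := by
      refine integral_congr_ae (ae_of_all _ fun x => ?_)
      have hnn : 0 ≤ gaussianPDFReal 0 v x := gaussianPDFReal_nonneg _ _ _
      show (gaussianPDFReal 0 v x).toNNReal • x ^ 2
          = (√(2 * π * v))⁻¹ * (x ^ 2 * Real.exp (-(2 * (v:ℝ))⁻¹ * x ^ 2))
      rw [NNReal.smul_def, smul_eq_mul, Real.coe_toNNReal _ hnn, gaussianPDFReal]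
      have : -(x - 0) ^ 2 / (2 * (v:ℝ)) = -(2 * (v:ℝ))⁻¹ * x ^ 2 := by field_simp; ring
      rw [this]; ring
    rw [hcong, integral_const_mul, my_integral_sq_mul_exp hb]
    have h1 : ((2:ℝ) * (2 * (v:ℝ))⁻¹)⁻¹ = (v:ℝ) := by field_simp
    have h2 : π / (2 * (v:ℝ))⁻¹ = 2 * π * (v:ℝ) := by field_simp
    rw [h1, h2]
    have hs : (0:ℝ) < Real.sqrt (2 * π * v) := by
      apply Real.sqrt_pos.mpr; positivity
    field_simp

lemma my_integrable_id_gaussianReal (v : ℝ≥0) :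
    Integrable (fun x : ℝ => x) (gaussianReal 0 v) := by
  have h1 : Integrable (fun x : ℝ => 1 + x ^ 2) (gaussianReal 0 v) :=
    (integrable_const 1).add (my_integrable_sq_gaussianReal v)
  refine h1.mono' measurable_id.aestronglyMeasurable (ae_of_all _ fun x => ?_)
  rw [Real.norm_eq_abs]
  nlinarith [sq_nonneg (|x| - 1), abs_nonneg x, sq_abs x]

lemma my_integral_id_gaussianReal (v : ℝ≥0) :
    ∫ x, x ∂(gaussianReal 0 v) = 0 := by
  have hone : (⟨(-1:ℝ)^2, sq_nonneg _⟩ : ℝ≥0) = 1 := by ext; norm_num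
  have hmap : (gaussianReal 0 v).map (fun x => (-1:ℝ) * x) = gaussianReal 0 v := by
    have := gaussianReal_map_const_mul (μ := 0) (v := v) (-1 : ℝ)
    rw [this]; congr 1
    · simp
    · ext; simp
  have hsym : ∫ x, x ∂(gaussianReal 0 v) = ∫ x, (-1:ℝ) * x ∂(gaussianReal 0 v) := by
    conv_lhs => rw [← hmap]
    exact integral_map (f := fun x : ℝ => x)
      (measurable_const_mul (-1:ℝ)).aemeasurable measurable_id.aestronglyMeasurable
  have h2 : ∫ x, (-1:ℝ) * x ∂(gaussianReal 0 v) = -∫ x, x ∂(gaussianReal 0 v) := by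
    simp only [neg_one_mul]
    exact integral_neg _
  rw [h2] at hsym
  linarith

variable {Ω : Type} [MeasureSpace Ω] [IsProbabilityMeasure (volume : Measure Ω)]

lemma my_gauss_memLp {X : Ω → ℝ} (hX : Measurable X)
    {v : ℝ≥0} (hlaw : Measure.map X (volume : Measure Ω) = gaussianReal 0 v) :
    MemLp X 2 (volume : Measure Ω) := by
  rw [memLp_two_iff_integrable_sq hX.aestronglyMeasurable]
  have h1 : Integrable (fun x : ℝ => x ^ 2) (Measure.map X volume) :=
    hlaw ▸ my_integrable_sq_gaussianReal v
  exact (integrable_map_measure (by fun_prop) hX.aemeasurable).mp h1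

lemma my_gauss_integral_zero {X : Ω → ℝ} (hX : Measurable X)
    {v : ℝ≥0} (hlaw : Measure.map X (volume : Measure Ω) = gaussianReal 0 v) :
    ∫ ω, X ω = 0 := by
  have h := integral_map (μ := (volume : Measure Ω)) hX.aemeasurable (f := fun x : ℝ => x)
    measurable_id.aestronglyMeasurable
  rw [hlaw, my_integral_id_gaussianReal v] at h
  exact h.symm

lemma my_gauss_integral_sq {X : Ω → ℝ} (hX : Measurable X)
    {v : ℝ≥0} (hlaw : Measure.map X (volume : Measure Ω) = gaussianReal 0 v) :
    ∫ ω, (X ω) ^ 2 = (v : ℝ) := by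
  have h := integral_map (μ := (volume : Measure Ω)) hX.aemeasurable (f := fun x : ℝ => x ^ 2)
    (by fun_prop : Measurable fun x : ℝ => x ^ 2).aestronglyMeasurable
  rw [hlaw, my_integral_sq_gaussianReal v] at h
  exact h.symm

lemma my_sum_sq_integral {ι : Type} [Fintype ι] (Z : ι → Ω → ℝ)
    (hmeas : ∀ m, Measurable (Z m))
    (hindep : iIndepFun Z (volume : Measure Ω)) (v : ι → ℝ≥0)
    (hlaw : ∀ m, Measure.map (Z m) (volume : Measure Ω) = gaussianReal 0 (v m)) :
    Integrable (fun ω => (∑ m, Z m ω) ^ 2) (volume : Measure Ω) ∧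
      ∫ ω, (∑ m, Z m ω) ^ 2 = ∑ m, (v m : ℝ) := by
  have hL2 : ∀ m, MemLp (Z m) 2 (volume : Measure Ω) :=
    fun m => my_gauss_memLp (hmeas m) (hlaw m)
  have hsum : MemLp (∑ m, Z m) 2 (volume : Measure Ω) :=
    memLp_finset_sum' _ (fun m _ => hL2 m)
  have hsum_apply : ∀ ω, (∑ m, Z m) ω = ∑ m, Z m ω := fun ω => Finset.sum_apply ω _ _
  have hint : Integrable (fun ω => (∑ m, Z m ω) ^ 2) (volume : Measure Ω) := by
    have := (memLp_two_iff_integrable_sq hsum.aestronglyMeasurable).mp hsum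
    refine this.congr (ae_of_all _ fun ω => ?_)
    simp only [hsum_apply]
  refine ⟨hint, ?_⟩
  have hvar := IndepFun.variance_sum (μ := (volume : Measure Ω))
    (X := Z) (s := Finset.univ) (fun m _ => hL2 m)
    (fun m _ n _ hmn => hindep.indepFun hmn)
  have hmean : ∫ ω, (∑ m, Z m) ω = 0 := by
    have : ∫ ω, (∑ m, Z m) ω = ∑ m, ∫ ω, Z m ω := by
      simp only [hsum_apply]
      exact integral_finset_sum _ (fun m _ => (hL2 m).integrable one_le_two)
    rw [this]
    exact Finset.sum_eq_zero (fun m _ => my_gauss_integral_zero (hmeas m) (hlaw m))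
  have hv1 : variance (∑ m, Z m) (volume : Measure Ω) = ∫ ω, (∑ m, Z m ω) ^ 2 := by
    rw [variance_eq_sub hsum]
    simp only [Pi.pow_apply]
    rw [show (∫ ω, ((∑ m, Z m) ω) ^ 2) = ∫ ω, (∑ m, Z m ω) ^ 2 from
      integral_congr_ae (ae_of_all _ fun ω => by simp only [hsum_apply]), hmean]
    ring
  have hv2 : ∀ m, variance (Z m) (volume : Measure Ω) = (v m : ℝ) := by
    intro m
    rw [variance_eq_sub (hL2 m)]
    simp only [Pi.pow_apply]
    rw [my_gauss_integral_sq (hmeas m) (hlaw m),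
      my_gauss_integral_zero (hmeas m) (hlaw m)]
    ring
  rw [← hv1, hvar]
  exact Finset.sum_congr rfl (fun m _ => hv2 m)

lemma my_component_sq {K : ℕ} (τp : ℝ) (hτp : 0 < τp) (β : Fin K → ℝ) (hβ : ∀ k, 0 < β k)
    (X : Fin K → Ω → ℝ) (N : Ω → ℝ)
    (hXm : ∀ k, Measurable (X k)) (hNm : Measurable N)
    (hXlaw : ∀ k, Measure.map (X k) (volume : Measure Ω) = gaussianReal 0 (β k / 2).toNNReal)
    (hNlaw : Measure.map N (volume : Measure Ω) = gaussianReal 0 ((1:ℝ) / 2).toNNReal)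
    (hindep : iIndepFun
      (Sum.elim (fun k ω => Real.sqrt τp * X k ω) (fun _ ω => N ω) : Fin K ⊕ Unit → Ω → ℝ)
      (volume : Measure Ω)) :
    Integrable (fun ω => (Real.sqrt τp * ∑ k, X k ω + N ω) ^ 2) (volume : Measure Ω) ∧
      ∫ ω, (Real.sqrt τp * ∑ k, X k ω + N ω) ^ 2 = τp * (∑ k, β k) / 2 + 1 / 2 := by
  set Z : Fin K ⊕ Unit → Ω → ℝ :=
    Sum.elim (fun k ω => Real.sqrt τp * X k ω) (fun _ ω => N ω) with hZ
  set v : Fin K ⊕ Unit → ℝ≥0 :=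
    Sum.elim (fun k => (τp * β k / 2).toNNReal) (fun _ => ((1:ℝ)/2).toNNReal) with hv
  have hZm : ∀ m, Measurable (Z m) := by
    rintro (k | u)
    · exact (hXm k).const_mul _
    · exact hNm
  have hZlaw : ∀ m, Measure.map (Z m) (volume : Measure Ω) = gaussianReal 0 (v m) := by
    rintro (k | u)
    · show Measure.map (fun ω => Real.sqrt τp * X k ω) (volume : Measure Ω)
          = gaussianReal 0 ((τp * β k / 2).toNNReal)
      have hmap := (gaussianReal_const_mul (X := X k) ⟨(hXm k).aemeasurable, hXlaw k⟩ (Real.sqrt τp)).map_eq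
      simp only [mul_zero] at hmap
      rw [hmap]
      congr 1
      ext
      simp only [NNReal.coe_mul, NNReal.coe_mk]
      rw [Real.sq_sqrt hτp.le,
        Real.coe_toNNReal _ (div_nonneg (mul_nonneg hτp.le (hβ k).le) (by norm_num)),
        Real.coe_toNNReal _ (div_nonneg (hβ k).le (by norm_num))]
      ring
    · exact hNlaw
  obtain ⟨hint, hval⟩ := my_sum_sq_integral Z hZm hindep v hZlaw
  have hsum_eq : ∀ ω, (∑ m, Z m ω) = Real.sqrt τp * ∑ k, X k ω + N ω := by
    intro ω
    rw [Fintype.sum_sum_type]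
    simp [hZ, Finset.mul_sum]
  have hvsum : (∑ m, (v m : ℝ)) = τp * (∑ k, β k) / 2 + 1 / 2 := by
    rw [Fintype.sum_sum_type]
    have h1 : (∑ k, ((v (Sum.inl k) : ℝ))) = ∑ k, τp * β k / 2 :=
      Finset.sum_congr rfl fun k _ => by
        simp only [hv, Sum.elim_inl]
        exact Real.coe_toNNReal _ (div_nonneg (mul_nonneg hτp.le (hβ k).le) (by norm_num))
    have h2 : (∑ _u : Unit, ((v (Sum.inr ()) : ℝ))) = 1 / 2 := by
      simp only [hv, Sum.elim_inr]
      rw [Fintype.sum_unique]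
      exact Real.coe_toNNReal _ (by norm_num)
    rw [h1]
    have h3 : (∑ k, τp * β k / 2) = τp * (∑ k, β k) / 2 := by
      rw [← Finset.sum_div, ← Finset.mul_sum]
    rw [h3]
    congr 1
  constructor
  · refine hint.congr (ae_of_all _ fun ω => ?_)
    simp only [hsum_eq]
  · rw [← hvsum, ← hval]
    exact integral_congr_ae (ae_of_all _ fun ω => by simp only [hsum_eq])


/-- `IsCNVec L θ z` means `z` is a complex Gaussian random vector `CN(0, θ I_L)`. -/
def IsCNVec {Ω : Type} [MeasureSpace Ω] (L : ℕ) (θ : ℝ) (z : Ω → Fin L → ℂ) : Prop :=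
  (∀ i, Measurable fun ω => z ω i) ∧
  iIndepFun (fun i ω => z ω i) (volume : Measure Ω) ∧
  (∀ i, IndepFun (fun ω => (z ω i).re) (fun ω => (z ω i).im) (volume : Measure Ω)) ∧
  (∀ i, Measure.map (fun ω => (z ω i).re) (volume : Measure Ω)
      = gaussianReal 0 (θ / 2).toNNReal) ∧
  (∀ i, Measure.map (fun ω => (z ω i).im) (volume : Measure Ω)
      = gaussianReal 0 (θ / 2).toNNReal)

/-- Uplink pilot model: the MMSE channel estimate `ĥ_j = c_j·ỹ` satisfies `(1/L)·E[‖ĥ_j‖²] = θ_j`. -/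
theorem mmse_estimate_mean_square
    {Ω : Type} [MeasureSpace Ω] [IsProbabilityMeasure (volume : Measure Ω)]
    (L K : ℕ) (hL : 0 < L) (hK : 0 < K) (τp : ℝ) (hτp : 0 < τp)
    (β : Fin K → ℝ) (hβ : ∀ k, 0 < β k)
    (h : Fin K → Ω → Fin L → ℂ) (nv : Ω → Fin L → ℂ)
    (hh : ∀ k, IsCNVec L (β k) (h k)) (hn : IsCNVec L 1 nv)
    (hindep : iIndepFun
      (Sum.elim (fun k ω => h k ω) (fun _ ω => nv ω) : Fin K ⊕ Unit → Ω → Fin L → ℂ)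
      (volume : Measure Ω))
    (ytil : Ω → Fin L → ℂ)
    (hytil : ∀ ω i, ytil ω i = (Real.sqrt τp : ℂ) * ∑ k, h k ω i + nv ω i)
    (j : Fin K)
    (c θj : ℝ)
    (hc : c = Real.sqrt τp * β j / (1 + τp * ∑ i, β i))
    (hθj : θj = τp * β j ^ 2 / (1 + τp * ∑ i, β i)) :
    (1 / (L : ℝ)) * ∫ ω, ∑ i, Complex.normSq ((c : ℂ) * ytil ω i) = θj := by
  have hS : 0 < ∑ i, β i := Finset.sum_pos (fun i _ => hβ i) ⟨j, Finset.mem_univ j⟩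
  have hD : 0 < 1 + τp * ∑ i, β i := by positivity
  have key : ∀ i : Fin L,
      Integrable (fun ω => Complex.normSq ((c : ℂ) * ytil ω i)) (volume : Measure Ω) ∧
      ∫ ω, Complex.normSq ((c : ℂ) * ytil ω i)
        = c ^ 2 * (τp * (∑ k, β k) + 1) := by
    intro i
    -- real part
    have hindre : iIndepFun
        (Sum.elim (fun k ω => Real.sqrt τp * (h k ω i).re) (fun _ ω => (nv ω i).re) :
          Fin K ⊕ Unit → Ω → ℝ) (volume : Measure Ω) := by
      have hg : ∀ m : Fin K ⊕ Unit, Measurable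
          ((Sum.elim (fun _ (f : Fin L → ℂ) => Real.sqrt τp * (f i).re)
            (fun _ (f : Fin L → ℂ) => (f i).re)) m) := by
        rintro (k | u)
        · exact (Complex.measurable_re.comp (measurable_pi_apply i)).const_mul _
        · exact Complex.measurable_re.comp (measurable_pi_apply i)
      have hcomp := hindep.comp _ hg
      have heq : (fun m => (Sum.elim (fun _ (f : Fin L → ℂ) => Real.sqrt τp * (f i).re)
            (fun _ (f : Fin L → ℂ) => (f i).re)) m ∘
            (Sum.elim (fun k ω => h k ω) (fun _ ω => nv ω) : Fin K ⊕ Unit → Ω → Fin L → ℂ) m)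
          = (Sum.elim (fun k ω => Real.sqrt τp * (h k ω i).re) (fun _ ω => (nv ω i).re) :
              Fin K ⊕ Unit → Ω → ℝ) := by
        funext m
        cases m <;> rfl
      rw [heq] at hcomp
      exact hcomp
    have hindim : iIndepFun
        (Sum.elim (fun k ω => Real.sqrt τp * (h k ω i).im) (fun _ ω => (nv ω i).im) :
          Fin K ⊕ Unit → Ω → ℝ) (volume : Measure Ω) := by
      have hg : ∀ m : Fin K ⊕ Unit, Measurable
          ((Sum.elim (fun _ (f : Fin L → ℂ) => Real.sqrt τp * (f i).im)
            (fun _ (f : Fin L → ℂ) => (f i).im)) m) := by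
        rintro (k | u)
        · exact (Complex.measurable_im.comp (measurable_pi_apply i)).const_mul _
        · exact Complex.measurable_im.comp (measurable_pi_apply i)
      have hcomp := hindep.comp _ hg
      have heq : (fun m => (Sum.elim (fun _ (f : Fin L → ℂ) => Real.sqrt τp * (f i).im)
            (fun _ (f : Fin L → ℂ) => (f i).im)) m ∘
            (Sum.elim (fun k ω => h k ω) (fun _ ω => nv ω) : Fin K ⊕ Unit → Ω → Fin L → ℂ) m)
          = (Sum.elim (fun k ω => Real.sqrt τp * (h k ω i).im) (fun _ ω => (nv ω i).im) :
              Fin K ⊕ Unit → Ω → ℝ) := by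
        funext m
        cases m <;> rfl
      rw [heq] at hcomp
      exact hcomp
    obtain ⟨Ire, Ere⟩ := my_component_sq τp hτp β hβ
      (fun k ω => (h k ω i).re) (fun ω => (nv ω i).re)
      (fun k => Complex.measurable_re.comp ((hh k).1 i))
      (Complex.measurable_re.comp (hn.1 i))
      (fun k => (hh k).2.2.2.1 i) (hn.2.2.2.1 i) hindre
    obtain ⟨Iim, Eim⟩ := my_component_sq τp hτp β hβ
      (fun k ω => (h k ω i).im) (fun ω => (nv ω i).im)
      (fun k => Complex.measurable_im.comp ((hh k).1 i))
      (Complex.measurable_im.comp (hn.1 i))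
      (fun k => (hh k).2.2.2.2 i) (hn.2.2.2.2 i) hindim
    have hre : ∀ ω, (ytil ω i).re
        = Real.sqrt τp * (∑ k, (h k ω i).re) + (nv ω i).re := by
      intro ω
      rw [hytil ω i]
      simp [Complex.add_re, Complex.mul_re, Complex.re_sum]
    have him : ∀ ω, (ytil ω i).im
        = Real.sqrt τp * (∑ k, (h k ω i).im) + (nv ω i).im := by
      intro ω
      rw [hytil ω i]
      simp [Complex.add_im, Complex.mul_im, Complex.im_sum]
    have h1 : Integrable (fun ω => (ytil ω i).re ^ 2) (volume : Measure Ω) :=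
      Ire.congr (ae_of_all _ fun ω => by simp only [hre])
    have h2 : Integrable (fun ω => (ytil ω i).im ^ 2) (volume : Measure Ω) :=
      Iim.congr (ae_of_all _ fun ω => by simp only [him])
    have e1 : ∫ ω, (ytil ω i).re ^ 2 = τp * (∑ k, β k) / 2 + 1 / 2 := by
      rw [← Ere]
      exact integral_congr_ae (ae_of_all _ fun ω => by simp only [hre])
    have e2 : ∫ ω, (ytil ω i).im ^ 2 = τp * (∑ k, β k) / 2 + 1 / 2 := by
      rw [← Eim]
      exact integral_congr_ae (ae_of_all _ fun ω => by simp only [him])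
    have hnsq : ∀ ω, Complex.normSq ((c : ℂ) * ytil ω i)
        = c ^ 2 * ((ytil ω i).re ^ 2 + (ytil ω i).im ^ 2) := by
      intro ω
      rw [Complex.normSq_mul, Complex.normSq_ofReal, Complex.normSq_apply]
      ring
    constructor
    · refine (((h1.add h2).const_mul (c ^ 2)).congr (ae_of_all _ fun ω => ?_))
      exact (hnsq ω).symm
    · rw [integral_congr_ae (ae_of_all _ fun ω => hnsq ω), integral_const_mul,
        integral_add h1 h2, e1, e2]
      ring
  rw [integral_finset_sum _ (fun i _ => (key i).1),
    Finset.sum_congr rfl (fun i _ => (key i).2), Finset.sum_const, Finset.card_univ,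
    Fintype.card_fin, nsmul_eq_mul]
  have hL' : (L : ℝ) ≠ 0 := Nat.cast_ne_zero.mpr hL.ne'
  rw [one_div, ← mul_assoc, inv_mul_cancel₀ hL', one_mul, hc, hθj]
  rw [div_pow, mul_pow, Real.sq_sqrt hτp.le]
  rw [show τp * (∑ k, β k) + 1 = 1 + τp * ∑ k, β k by ring]
  field_simp
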